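/- arXiv:2010.15742 — 2 statements merged into one kernel-verified Lean document; each statement's English description precedes it below -/
import Mathlib

section
/- Let (M1, g1) and (M2, g2) be closed Riemannian manifolds of dimensions n and m respectively, such that at points p ∈ M1 and q ∈ M2 the k1-th intermediate Ricci curvature of M1 is positive and the k2-th intermediate Ricci curvature of M2 is positive. Then at the point (p,q) the Riemannian product (M1 × M2, g1 ⊕ g2) has positive k-th intermediate Ricci curvature for k = max{n + k2, m + k1}. -/
open scoped RealInnerProductSpace

/-- A (curvature-like) quadrilinear form `R` on an inner product space has positive
`k`-th intermediate Ricci curvature at the given point if for every orthonormal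
`(k+1)`-frame `{v, w₁, …, w_k}` one has `∑ᵢ sec(v, wᵢ) = ∑ᵢ R(v, wᵢ, wᵢ, v) > 0`. -/
def RicciPos {V : Type*} [NormedAddCommGroup V] [InnerProductSpace ℝ V]
    (R : V →ₗ[ℝ] V →ₗ[ℝ] V →ₗ[ℝ] V →ₗ[ℝ] ℝ) (k : ℕ) : Prop :=
  ∀ (v : V) (w : Fin k → V), Orthonormal ℝ (Fin.cons v w) → 0 < ∑ i, R v (w i) (w i) v


lemma filter_eq_map_castLE {d k' : ℕ} (hk : k' ≤ d) :
    Finset.univ.filter (fun j : Fin d => (j : ℕ) < k')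
      = Finset.univ.map (Fin.castLEEmb hk) := by
  ext j
  simp only [Finset.mem_filter, Finset.mem_univ, true_and, Finset.mem_map,
    Fin.castLEEmb_apply]
  constructor
  · intro hj; exact ⟨⟨(j : ℕ), hj⟩, by ext; rfl⟩
  · rintro ⟨i, rfl⟩; exact i.isLt

lemma sum_castLE {d k' : ℕ} (hk : k' ≤ d) (f : Fin d → ℝ) :
    ∑ j : Fin k', f (Fin.castLE hk j)
      = ∑ j ∈ Finset.univ.filter (fun j : Fin d => (j : ℕ) < k'), f j := by
  rw [filter_eq_map_castLE hk, Finset.sum_map]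
  rfl



lemma lemB {d k' : ℕ} (hk1 : 1 ≤ k') (hk : k' ≤ d) (μ p : Fin d → ℝ)
    (hmono : Monotone μ) (hp0 : ∀ j, 0 ≤ p j) (hp1 : ∀ j, p j ≤ 1)
    (hsum : (k' : ℝ) ≤ ∑ j, p j)
    (hσ : 0 < ∑ j ∈ Finset.univ.filter (fun j : Fin d => (j : ℕ) < k'), μ j) :
    (∑ j ∈ Finset.univ.filter (fun j : Fin d => (j : ℕ) < k'), μ j) ≤ ∑ j, μ j * p j := by
  set A : Finset (Fin d) := Finset.univ.filter (fun j : Fin d => (j : ℕ) < k') with hA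
  have hmem : ∀ j : Fin d, j ∈ A ↔ (j : ℕ) < k' := by
    intro j; simp [hA]
  have cardA : A.card = k' := by
    have hd1 : 0 < d := by omega
    rw [← Finset.card_range k']
    refine Finset.card_nbij' (fun j : Fin d => (j : ℕ))
      (fun i : ℕ => (⟨i % d, Nat.mod_lt _ hd1⟩ : Fin d)) ?_ ?_ ?_ ?_
    · intro a ha; exact Finset.mem_range.mpr ((hmem a).mp ha)
    · intro a ha
      have : a < k' := Finset.mem_range.mp ha
      exact (hmem _).mpr (by simpa [Nat.mod_eq_of_lt (by omega : a < d)] using this)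
    · intro a ha; ext; simp [Nat.mod_eq_of_lt a.isLt]
    · intro a ha
      have : a < k' := Finset.mem_range.mp ha
      simp [Nat.mod_eq_of_lt (by omega : a < d)]
  have hkd : k' - 1 < d := by omega
  set lam : ℝ := μ ⟨k' - 1, hkd⟩ with hlam
  have hAle : ∀ j ∈ A, μ j ≤ lam := by
    intro j hj
    have hj' := (hmem j).mp hj
    exact hmono (by simp only [Fin.le_def]; omega : j ≤ (⟨k' - 1, hkd⟩ : Fin d))
  have hBge : ∀ j ∈ Finset.univ.filter (fun j : Fin d => ¬ (j : ℕ) < k'), lam ≤ μ j := by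
    intro j hj
    simp only [Finset.mem_filter] at hj
    exact hmono (by simp only [Fin.le_def]; omega : (⟨k' - 1, hkd⟩ : Fin d) ≤ j)
  have hlampos : 0 < lam := by
    by_contra h
    push_neg at h
    have : ∑ j ∈ A, μ j ≤ ∑ j ∈ A, lam := Finset.sum_le_sum hAle
    rw [Finset.sum_const, cardA, nsmul_eq_mul] at this
    have h2 : (k' : ℝ) * lam ≤ 0 := mul_nonpos_of_nonneg_of_nonpos (by positivity) h
    linarith
  set B : Finset (Fin d) := Finset.univ.filter (fun j : Fin d => ¬ (j : ℕ) < k') with hB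
  have hsplit : ∀ f : Fin d → ℝ, ∑ j, f j = ∑ j ∈ A, f j + ∑ j ∈ B, f j := by
    intro f; rw [hA, hB]; exact (Finset.sum_filter_add_sum_filter_not _ _ _).symm
  have hpA : ∑ j ∈ A, p j ≤ (k' : ℝ) := by
    calc ∑ j ∈ A, p j ≤ ∑ j ∈ A, (1 : ℝ) := Finset.sum_le_sum (fun j _ => hp1 j)
    _ = (k' : ℝ) := by rw [Finset.sum_const, cardA]; simp
  have hpB : (k' : ℝ) - ∑ j ∈ A, p j ≤ ∑ j ∈ B, p j := by
    have := hsplit p; linarith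
  have step1 : ∑ j ∈ A, μ j ≤ ∑ j ∈ A, μ j * p j + lam * ((k':ℝ) - ∑ j ∈ A, p j) := by
    have : ∀ j ∈ A, μ j ≤ μ j * p j + lam * (1 - p j) := by
      intro j hj
      nlinarith [hAle j hj, hp0 j, hp1 j]
    calc ∑ j ∈ A, μ j ≤ ∑ j ∈ A, (μ j * p j + lam * (1 - p j)) := Finset.sum_le_sum this
      _ = ∑ j ∈ A, μ j * p j + lam * ((k':ℝ) - ∑ j ∈ A, p j) := by
          rw [Finset.sum_add_distrib, ← Finset.mul_sum, Finset.sum_sub_distrib,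
            Finset.sum_const, cardA]
          simp
  have step2 : lam * ((k':ℝ) - ∑ j ∈ A, p j) ≤ ∑ j ∈ B, μ j * p j := by
    calc lam * ((k':ℝ) - ∑ j ∈ A, p j) ≤ lam * ∑ j ∈ B, p j :=
          mul_le_mul_of_nonneg_left hpB hlampos.le
      _ = ∑ j ∈ B, lam * p j := Finset.mul_sum _ _ _
      _ ≤ ∑ j ∈ B, μ j * p j :=
          Finset.sum_le_sum (fun j hj => mul_le_mul_of_nonneg_right (hBge j hj) (hp0 j))
  rw [hsplit (fun j => μ j * p j)]
  linarith
lemma lemA {U : Type*} [NormedAddCommGroup U] [InnerProductSpace ℝ U] [FiniteDimensional ℝ U]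
    {d k' : ℕ} (hd : Module.finrank ℝ U = d) (hk : k' ≤ d)
    (T : U →ₗ[ℝ] U) (hT : T.IsSymmetric)
    (hpos : ∀ w : Fin k' → U, Orthonormal ℝ w → 0 < ∑ i, ⟪T (w i), w i⟫)
    {N : ℕ} (b : Fin N → U)
    (hb : ∀ x : U, ∑ i, ⟪b i, x⟫ ^ 2 ≤ ‖x‖ ^ 2)
    (htr : (k' : ℝ) ≤ ∑ i, ‖b i‖ ^ 2) :
    0 < ∑ i, ⟪T (b i), b i⟫ := by
  rcases Nat.eq_zero_or_pos k' with hk0 | hk1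
  · subst hk0
    have hO : Orthonormal ℝ (fun i : Fin 0 => (0 : U)) := ⟨fun i => i.elim0, fun i => i.elim0⟩
    simpa using hpos _ hO
  -- eigen decomposition, sorted
  set e0 := hT.eigenvectorBasis hd with he0
  set μ0 := hT.eigenvalues hd with hμ0
  set σp := Tuple.sort μ0 with hσp
  set e : OrthonormalBasis (Fin d) ℝ U := e0.reindex σp.symm with he
  set μ : Fin d → ℝ := μ0 ∘ σp with hμ
  have hmono : Monotone μ := Tuple.monotone_sort μ0
  have heig : ∀ j, T (e j) = μ j • e j := by
    intro j
    simp [he, hμ, OrthonormalBasis.reindex_apply, hT.apply_eigenvectorBasis]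
    exact hT.apply_eigenvectorBasis hd (σp j)
  have hTee : ∀ j, ⟪T (e j), e j⟫ = μ j := by
    intro j
    rw [heig j, real_inner_smul_left, real_inner_self_eq_norm_sq, e.orthonormal.1 j]
    simp
  -- quadratic form in eigencoordinates
  have hquad : ∀ x : U, ⟪T x, x⟫ = ∑ j, μ j * ⟪x, e j⟫ ^ 2 := by
    intro x
    have h1 : ∑ j, ⟪T x, e j⟫ * ⟪e j, x⟫ = ⟪T x, x⟫ := e.sum_inner_mul_inner (T x) x
    rw [← h1]
    refine Finset.sum_congr rfl fun j _ => ?_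
    rw [hT x (e j), heig j, real_inner_smul_right, real_inner_comm (e j) x]
    ring
  -- Parseval
  have hpars : ∀ x : U, ∑ j, ⟪x, e j⟫ ^ 2 = ‖x‖ ^ 2 := by
    intro x
    have h1 : ∑ j, ⟪x, e j⟫ * ⟪e j, x⟫ = ⟪x, x⟫ := e.sum_inner_mul_inner x x
    rw [← real_inner_self_eq_norm_sq, ← h1]
    refine Finset.sum_congr rfl fun j _ => ?_
    rw [real_inner_comm (e j) x]; ring
  set p : Fin d → ℝ := fun j => ∑ i, ⟪b i, e j⟫ ^ 2 with hp
  have hp0 : ∀ j, 0 ≤ p j := fun j => Finset.sum_nonneg fun i _ => sq_nonneg _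
  have hp1 : ∀ j, p j ≤ 1 := by
    intro j
    have := hb (e j)
    rwa [e.orthonormal.1 j, one_pow] at this
  have hpsum : (k' : ℝ) ≤ ∑ j, p j := by
    rw [hp]
    simp only
    rw [Finset.sum_comm]
    calc (k' : ℝ) ≤ ∑ i, ‖b i‖ ^ 2 := htr
      _ = ∑ i, ∑ j, ⟪b i, e j⟫ ^ 2 := by
          refine Finset.sum_congr rfl fun i _ => (hpars (b i)).symm
  have hσpos : 0 < ∑ j ∈ Finset.univ.filter (fun j : Fin d => (j : ℕ) < k'), μ j := by
    rw [← sum_castLE hk μ]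
    have hO : Orthonormal ℝ (fun j : Fin k' => e (Fin.castLE hk j)) :=
      e.orthonormal.comp _ (Fin.castLE_injective hk)
    have := hpos _ hO
    calc (0:ℝ) < ∑ j : Fin k', ⟪T (e (Fin.castLE hk j)), e (Fin.castLE hk j)⟫ := this
      _ = ∑ j : Fin k', μ (Fin.castLE hk j) :=
          Finset.sum_congr rfl fun j _ => hTee _
  have key := lemB hk1 hk μ p hmono hp0 hp1 hpsum hσpos
  have : ∑ i, ⟪T (b i), b i⟫ = ∑ j, μ j * p j := by
    rw [hp]
    simp only
    calc ∑ i, ⟪T (b i), b i⟫ = ∑ i, ∑ j, μ j * ⟪b i, e j⟫ ^ 2 :=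
          Finset.sum_congr rfl fun i _ => hquad (b i)
      _ = ∑ j, ∑ i, μ j * ⟪b i, e j⟫ ^ 2 := Finset.sum_comm
      _ = ∑ j, μ j * ∑ i, ⟪b i, e j⟫ ^ 2 := by
          refine Finset.sum_congr rfl fun j _ => ?_
          rw [Finset.mul_sum]
  rw [this]
  exact lt_of_lt_of_le hσpos key

section helpers
variable {U : Type*} [NormedAddCommGroup U] [InnerProductSpace ℝ U]

lemma parseval [FiniteDimensional ℝ U] {ι : Type*} [Fintype ι]
    (e : OrthonormalBasis ι ℝ U) (x : U) : ∑ i, ⟪x, e i⟫ ^ 2 = ‖x‖ ^ 2 := by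
  have h1 : ∑ j, ⟪x, e j⟫ * ⟪e j, x⟫ = ⟪x, x⟫ := e.sum_inner_mul_inner x x
  rw [← real_inner_self_eq_norm_sq, ← h1]
  refine Finset.sum_congr rfl fun j _ => ?_
  rw [real_inner_comm (e j) x]; ring

lemma orthonormal_cons {k : ℕ} {u : U} {w : Fin k → U} (hu : ‖u‖ = 1)
    (huw : ∀ j, ⟪u, w j⟫ = 0) (hw : Orthonormal ℝ w) :
    Orthonormal ℝ (Fin.cons u w : Fin (k + 1) → U) := by
  constructor
  · intro i
    refine Fin.cases ?_ ?_ i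
    · simpa using hu
    · intro j; simpa using hw.1 j
  · intro i j hij
    rcases Fin.eq_zero_or_eq_succ i with rfl | ⟨i', rfl⟩ <;>
      rcases Fin.eq_zero_or_eq_succ j with rfl | ⟨j', rfl⟩
    · exact absurd rfl hij
    · simpa using huw j'
    · simpa [real_inner_comm] using huw i'
    · simp only [Fin.cons_succ]
      exact hw.2 (fun h => hij (by rw [h]))

noncomputable def toOp [FiniteDimensional ℝ U] (L : U →ₗ[ℝ] U →ₗ[ℝ] ℝ) : U →ₗ[ℝ] U where
  toFun x := (InnerProductSpace.toDual ℝ U).symm (LinearMap.toContinuousLinearMap (L x))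
  map_add' x y := by simp [map_add]
  map_smul' c x := by simp

lemma toOp_inner [FiniteDimensional ℝ U] (L : U →ₗ[ℝ] U →ₗ[ℝ] ℝ) (x y : U) :
    ⟪toOp L x, y⟫ = L x y := by
  simp [toOp, InnerProductSpace.toDual_symm_apply]

end helpers


noncomputable def Qbil {V : Type*} [NormedAddCommGroup V] [InnerProductSpace ℝ V]
    (R₁ : V →ₗ[ℝ] V →ₗ[ℝ] V →ₗ[ℝ] V →ₗ[ℝ] ℝ) (u : V) : V →ₗ[ℝ] V →ₗ[ℝ] ℝ where
  toFun x :=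
    { toFun := fun y => R₁ u x y u
      map_add' := by intro y z; simp
      map_smul' := by intro c y; simp }
  map_add' x y := by ext z; simp
  map_smul' c x := by ext z; simp

@[simp] lemma Qbil_apply {V : Type*} [NormedAddCommGroup V] [InnerProductSpace ℝ V]
    (R₁ : V →ₗ[ℝ] V →ₗ[ℝ] V →ₗ[ℝ] V →ₗ[ℝ] ℝ) (u x y : V) :
    Qbil R₁ u x y = R₁ u x y u := rfl

lemma factor {V W : Type*}
    [NormedAddCommGroup V] [InnerProductSpace ℝ V] [FiniteDimensional ℝ V]
    [NormedAddCommGroup W] [InnerProductSpace ℝ W] [FiniteDimensional ℝ W]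
    {n m k' k : ℕ} (hn : Module.finrank ℝ V = n) (hm : Module.finrank ℝ W = m)
    (hk'n : k' < n) (hmk : m + k' ≤ k)
    (R₁ : V →ₗ[ℝ] V →ₗ[ℝ] V →ₗ[ℝ] V →ₗ[ℝ] ℝ)
    (hsym : ∀ x y z t, R₁ x y z t = R₁ z t x y)
    (hskew : ∀ x y z t, R₁ x y z t = - R₁ y x z t)
    (h₁ : RicciPos R₁ k')
    (v₁ : V) (v₂ : W) (hv₁ : v₁ ≠ 0) (hv : ‖v₁‖ ^ 2 + ‖v₂‖ ^ 2 = 1)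
    (a : Fin k → V) (b : Fin k → W)
    (H1 : ∀ x : V, (∑ i, ⟪a i, x⟫ ^ 2) + ⟪v₁, x⟫ ^ 2 ≤ ‖x‖ ^ 2)
    (H3 : ∀ y : W, (∑ i, ⟪b i, y⟫ ^ 2) + ⟪v₂, y⟫ ^ 2 ≤ ‖y‖ ^ 2)
    (H2 : ∑ i, (‖a i‖ ^ 2 + ‖b i‖ ^ 2) = (k : ℝ)) :
    0 < ∑ i, R₁ v₁ (a i) (a i) v₁ := by
  -- the unit vector in the direction of v₁
  set u : V := ‖v₁‖⁻¹ • v₁ with hu_def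
  have hnv₁ : ‖v₁‖ ≠ 0 := norm_ne_zero_iff.mpr hv₁
  have hu : ‖u‖ = 1 := norm_smul_inv_norm hv₁
  have hv₁u : v₁ = ‖v₁‖ • u := by
    rw [hu_def, smul_smul, mul_inv_cancel₀ hnv₁, one_smul]
  -- derived symmetries
  have hskew2 : ∀ x y z t, R₁ x y z t = - R₁ x y t z := by
    intro x y z t
    rw [hsym, hskew, hsym]
  have Qker : ∀ x, R₁ u u x u = 0 := by
    intro x
    have := hskew u u x u
    linarith
  have Qker2 : ∀ x, R₁ u x u u = 0 := by
    intro x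
    have := hskew2 u x u u
    linarith
  have Qsym : ∀ x y, R₁ u x y u = R₁ u y x u := by
    intro x y
    calc R₁ u x y u = R₁ y u u x := hsym u x y u
      _ = - R₁ u y u x := by rw [← hskew]
      _ = R₁ u y x u := by rw [hskew2 u y x u]
  -- the symmetric operator representing x ↦ R₁ u x x u
  set T : V →ₗ[ℝ] V := toOp (Qbil R₁ u) with hT_def
  have hTQ : ∀ x y, ⟪T x, y⟫ = R₁ u x y u := fun x y => toOp_inner (Qbil R₁ u) x y
  have hTsym : T.IsSymmetric := by
    intro x y
    rw [hTQ, real_inner_comm (T y) x, hTQ, Qsym]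
  -- the orthogonal complement of v₁
  set K : Submodule ℝ V := (ℝ ∙ v₁)ᗮ with hK_def
  have hmemK : ∀ x : V, x ∈ K ↔ ⟪v₁, x⟫ = 0 := fun x =>
    Submodule.mem_orthogonal_singleton_iff_inner_right
  have huX : ∀ x, x ∈ K → ⟪u, x⟫ = 0 := by
    intro x hx
    rw [hu_def, real_inner_smul_left, (hmemK x).mp hx, mul_zero]
  have hn1 : 1 ≤ n := by omega
  haveI : Fact (Module.finrank ℝ V = (n - 1) + 1) := ⟨by omega⟩
  have hdK : Module.finrank ℝ K = n - 1 := Submodule.finrank_orthogonal_span_singleton hv₁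
  have hinner_v₁u : ⟪v₁, u⟫ = ‖v₁‖ := by
    rw [hu_def, real_inner_smul_right, real_inner_self_eq_norm_sq, pow_two]
    field_simp
  have hv₁u_slot : ∀ x, R₁ u x v₁ u = 0 := by
    intro x
    rw [hv₁u]
    have h : R₁ u x (‖v₁‖ • u) u = ‖v₁‖ * R₁ u x u u := by
      simp [map_smul]
    rw [h, Qker2, mul_zero]
  -- T maps into K
  have hTmap : ∀ x, T x ∈ K := by
    intro x
    rw [hmemK, real_inner_comm (T x) v₁, hTQ, hv₁u_slot]
  -- restrict T to K
  set T' : K →ₗ[ℝ] K := T.restrict (fun x _ => hTmap x) with hT'_def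
  have hT'app : ∀ x : K, (T' x : V) = T x := fun x => rfl
  have hT'Q : ∀ x y : K, ⟪T' x, y⟫ = R₁ u (x : V) (y : V) u := by
    intro x y
    rw [Submodule.coe_inner, hT'app, hTQ]
  have hT'sym : T'.IsSymmetric := by
    intro x y
    rw [hT'Q, Submodule.coe_inner, real_inner_comm ((T' y : V)) (x : V), hT'app, hTQ, Qsym]
  -- positivity hypothesis on K
  have hpos : ∀ w : Fin k' → K, Orthonormal ℝ w → 0 < ∑ j, ⟪T' (w j), w j⟫ := by
    intro w hw
    have hwcoe : Orthonormal ℝ (fun j => ((w j : V))) := by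
      constructor
      · intro j
        rw [← hw.1 j]
        rfl
      · intro i j hij
        exact hw.2 hij
    have hcons : Orthonormal ℝ (Fin.cons u (fun j => (w j : V)) : Fin (k' + 1) → V) :=
      orthonormal_cons hu (fun j => huX _ (w j).2) hwcoe
    have := h₁ u (fun j => (w j : V)) hcons
    calc (0:ℝ) < ∑ j, R₁ u ((w j : V)) ((w j : V)) u := this
      _ = ∑ j, ⟪T' (w j), w j⟫ := by
          refine Finset.sum_congr rfl fun j _ => ?_
          rw [hT'Q]
  -- the projected family
  set c : Fin k → ℝ := fun i => ⟪u, a i⟫ with hc_def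
  set y : Fin k → V := fun i => a i - c i • u with hy_def
  have hyK : ∀ i, y i ∈ K := by
    intro i
    rw [hmemK, hy_def]
    simp only [inner_sub_right, real_inner_smul_right]
    rw [hinner_v₁u]
    have : ⟪v₁, a i⟫ = ‖v₁‖ * ⟪u, a i⟫ := by
      nth_rewrite 1 [hv₁u]
      rw [real_inner_smul_left]
    rw [this, hc_def]
    ring
  have huKbot : u ∈ Kᗮ := by
    rw [hK_def, Submodule.orthogonal_orthogonal]
    exact Submodule.smul_mem _ _ (Submodule.mem_span_singleton_self v₁)
  set a' : Fin k → K := fun i => K.orthogonalProjectionOnto (a i) with ha'_def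
  have ha'coe : ∀ i, ((a' i : V)) = y i := by
    intro i
    refine Submodule.eq_starProjection_of_mem_orthogonal' (z := c i • u) (hyK i)
      (Submodule.smul_mem _ (c i) huKbot) ?_
    rw [hy_def]
    rw [sub_add_cancel]
  have hnormcoe : ∀ x : K, ‖(x : V)‖ = ‖x‖ := fun x => rfl
  -- Bessel-type bound for the projected family
  have hb : ∀ x : K, ∑ i, ⟪a' i, x⟫ ^ 2 ≤ ‖x‖ ^ 2 := by
    intro x
    have hax : ∀ i, ⟪a' i, x⟫ = ⟪a i, (x : V)⟫ := by
      intro i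
      rw [Submodule.coe_inner]
      have h0 : ⟪a i - (K.orthogonalProjectionOnto (a i) : V), (x : V)⟫ = 0 :=
        Submodule.starProjection_inner_eq_zero (K := K) (a i) (x : V) x.2
      rw [inner_sub_left] at h0
      rw [ha'_def]
      linarith [h0]
    have hvx : ⟪v₁, (x : V)⟫ = 0 := (hmemK _).mp x.2
    have := H1 (x : V)
    rw [hvx] at this
    calc ∑ i, ⟪a' i, x⟫ ^ 2 = ∑ i, ⟪a i, (x : V)⟫ ^ 2 :=
          Finset.sum_congr rfl fun i _ => by rw [hax]
      _ ≤ ‖(x : V)‖ ^ 2 := by simpa using this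
      _ = ‖x‖ ^ 2 := by rw [hnormcoe]
  -- trace bound for the projected family
  have hyu : ∀ i, ⟪y i, u⟫ = 0 := fun i => by
    rw [real_inner_comm u (y i)]; exact huX _ (hyK i)
  have hnormsplit : ∀ i, ‖a i‖ ^ 2 = ‖y i‖ ^ 2 + c i ^ 2 := by
    intro i
    have ha : a i = y i + c i • u := by rw [hy_def]; rw [sub_add_cancel]
    rw [ha, norm_add_sq_real, real_inner_smul_right, hyu, norm_smul, hu]
    simp [sq_abs]
  have hcsum : ∑ i, c i ^ 2 ≤ ‖v₂‖ ^ 2 := by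
    have h0 := H1 u
    rw [hinner_v₁u, hu] at h0
    have h1 : ∑ i, ⟪a i, u⟫ ^ 2 = ∑ i, c i ^ 2 :=
      Finset.sum_congr rfl fun i _ => by rw [real_inner_comm u (a i), hc_def]
    rw [h1] at h0
    nlinarith [h0]
  have hbsum : ∑ i, ‖b i‖ ^ 2 + ‖v₂‖ ^ 2 ≤ (m : ℝ) := by
    set f := stdOrthonormalBasis ℝ W with hf
    have hcard : Module.finrank ℝ W = m := hm
    have hstep : ∑ s, ((∑ i, ⟪b i, f s⟫ ^ 2) + ⟪v₂, f s⟫ ^ 2) ≤ (m : ℝ) := by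
      calc ∑ s, ((∑ i, ⟪b i, f s⟫ ^ 2) + ⟪v₂, f s⟫ ^ 2)
          ≤ ∑ s : Fin (Module.finrank ℝ W), ‖f s‖ ^ 2 :=
            Finset.sum_le_sum fun s _ => H3 (f s)
        _ = ∑ s : Fin (Module.finrank ℝ W), (1 : ℝ) :=
            Finset.sum_congr rfl fun s _ => by rw [f.orthonormal.1 s]; norm_num
        _ = (m : ℝ) := by simp [hcard]
    rw [Finset.sum_add_distrib] at hstep
    have hp2 : ∑ s, ⟪v₂, f s⟫ ^ 2 = ‖v₂‖ ^ 2 := parseval f v₂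
    have hp3 : ∑ s, ∑ i, ⟪b i, f s⟫ ^ 2 = ∑ i, ‖b i‖ ^ 2 := by
      rw [Finset.sum_comm]
      exact Finset.sum_congr rfl fun i _ => parseval f (b i)
    rw [hp2, hp3] at hstep
    exact hstep
  have habsum : ∑ i, ‖a i‖ ^ 2 + ∑ i, ‖b i‖ ^ 2 = (k : ℝ) := by
    rw [← Finset.sum_add_distrib]
    exact H2
  have htr : (k' : ℝ) ≤ ∑ i, ‖a' i‖ ^ 2 := by
    have hsum' : ∑ i, ‖a' i‖ ^ 2 = ∑ i, ‖a i‖ ^ 2 - ∑ i, c i ^ 2 := by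
      rw [← Finset.sum_sub_distrib]
      refine Finset.sum_congr rfl fun i _ => ?_
      rw [← hnormcoe, ha'coe, hnormsplit i]
      ring
    have hcast : (m : ℝ) + (k' : ℝ) ≤ (k : ℝ) := by exact_mod_cast hmk
    rw [hsum']
    linarith
  -- apply the spectral lemma
  have hkd : k' ≤ n - 1 := by omega
  have hfin := lemA hdK hkd T' hT'sym hpos a' hb htr
  -- convert back
  have h5 : ∀ i, ⟪T' (a' i), a' i⟫ = R₁ u (y i) (y i) u := by
    intro i
    rw [hT'Q, ha'coe]
  have h6 : ∀ i, R₁ u (a i) (a i) u = R₁ u (y i) (y i) u := by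
    intro i
    have ha : a i = y i + c i • u := by rw [hy_def]; rw [sub_add_cancel]
    rw [ha]
    simp [map_add, map_smul, Qker, Qker2]
  have h7 : ∀ i, R₁ v₁ (a i) (a i) v₁ = ‖v₁‖ ^ 2 * R₁ u (a i) (a i) u := by
    intro i
    conv_lhs => rw [hv₁u]
    simp only [map_smul, LinearMap.smul_apply, smul_eq_mul]
    ring
  have hfinal : ∑ i, R₁ v₁ (a i) (a i) v₁ = ‖v₁‖ ^ 2 * ∑ i, ⟪T' (a' i), a' i⟫ := by
    rw [Finset.mul_sum]
    refine Finset.sum_congr rfl fun i _ => ?_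
    rw [h7, h6, ← h5]
  rw [hfinal]
  exact mul_pos (by positivity) hfin




/-- Let `(M₁, g₁)` and `(M₂, g₂)` be closed Riemannian manifolds of dimensions `n` and
`m`, with tangent spaces `V₁` at `p ∈ M₁` and `V₂` at `q ∈ M₂` and curvature tensors
`R₁`, `R₂` there (satisfying the usual symmetries).  If at `p` the `k₁`-th intermediate
Ricci curvature of `M₁` is positive and at `q` the `k₂`-th intermediate Ricci curvature
of `M₂` is positive, then at `(p, q)` the Riemannian product `(M₁ × M₂, g₁ ⊕ g₂)`,
whose tangent space is the orthogonal direct sum `V₁ ⊕ V₂` and whose curvature tensor is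
`R((x₁,x₂),(y₁,y₂),(z₁,z₂),(t₁,t₂)) = R₁(x₁,y₁,z₁,t₁) + R₂(x₂,y₂,z₂,t₂)`, has positive
`k`-th intermediate Ricci curvature for `k = max {n + k₂, m + k₁}`. -/
theorem stmt_0 {V₁ V₂ : Type*}
    [NormedAddCommGroup V₁] [InnerProductSpace ℝ V₁] [FiniteDimensional ℝ V₁]
    [NormedAddCommGroup V₂] [InnerProductSpace ℝ V₂] [FiniteDimensional ℝ V₂]
    (n m k₁ k₂ : ℕ) (hn : Module.finrank ℝ V₁ = n) (hm : Module.finrank ℝ V₂ = m)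
    (R₁ : V₁ →ₗ[ℝ] V₁ →ₗ[ℝ] V₁ →ₗ[ℝ] V₁ →ₗ[ℝ] ℝ)
    (R₂ : V₂ →ₗ[ℝ] V₂ →ₗ[ℝ] V₂ →ₗ[ℝ] V₂ →ₗ[ℝ] ℝ)
    (hsym₁ : ∀ x y z t, R₁ x y z t = R₁ z t x y) (hskew₁ : ∀ x y z t, R₁ x y z t = - R₁ y x z t)
    (hbianchi₁ : ∀ x y z t, R₁ x y z t + R₁ y z x t + R₁ z x y t = 0)
    (hsym₂ : ∀ x y z t, R₂ x y z t = R₂ z t x y) (hskew₂ : ∀ x y z t, R₂ x y z t = - R₂ y x z t)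
    (hbianchi₂ : ∀ x y z t, R₂ x y z t + R₂ y z x t + R₂ z x y t = 0)
    (h₁ : RicciPos R₁ k₁) (h₂ : RicciPos R₂ k₂)
    (R : WithLp 2 (V₁ × V₂) →ₗ[ℝ] WithLp 2 (V₁ × V₂) →ₗ[ℝ] WithLp 2 (V₁ × V₂) →ₗ[ℝ]
      WithLp 2 (V₁ × V₂) →ₗ[ℝ] ℝ)
    (hR : ∀ x y z t : WithLp 2 (V₁ × V₂),
      R x y z t =
        R₁ (WithLp.equiv 2 (V₁ × V₂) x).1 (WithLp.equiv 2 (V₁ × V₂) y).1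
          (WithLp.equiv 2 (V₁ × V₂) z).1 (WithLp.equiv 2 (V₁ × V₂) t).1 +
        R₂ (WithLp.equiv 2 (V₁ × V₂) x).2 (WithLp.equiv 2 (V₁ × V₂) y).2
          (WithLp.equiv 2 (V₁ × V₂) z).2 (WithLp.equiv 2 (V₁ × V₂) t).2) :
    RicciPos R (max (n + k₂) (m + k₁)) := by
  obtain ⟨k, hk_def⟩ : ∃ k, k = max (n + k₂) (m + k₁) := ⟨_, rfl⟩
  rw [← hk_def]
  intro v w hon
  have hk1 : n + k₂ ≤ k := hk_def ▸ le_max_left _ _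
  have hk2 : m + k₁ ≤ k := hk_def ▸ le_max_right _ _
  -- dimension bound
  haveI : FiniteDimensional ℝ (WithLp 2 (V₁ × V₂)) :=
    Module.Finite.equiv (WithLp.linearEquiv 2 ℝ (V₁ × V₂)).symm
  have hfr : Module.finrank ℝ (WithLp 2 (V₁ × V₂)) = n + m := by
    rw [(WithLp.linearEquiv 2 ℝ (V₁ × V₂)).finrank_eq, Module.finrank_prod, hn, hm]
  have hcard : k + 1 ≤ n + m := by
    have := hon.linearIndependent.fintype_card_le_finrank
    rwa [Fintype.card_fin, hfr] at this
  have hk₁n : k₁ < n := by omega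
  have hk₂m : k₂ < m := by omega
  -- components
  set v₁ : V₁ := (WithLp.equiv 2 (V₁ × V₂) v).1 with hv₁_def
  set v₂ : V₂ := (WithLp.equiv 2 (V₁ × V₂) v).2 with hv₂_def
  set a : Fin k → V₁ := fun i => (WithLp.equiv 2 (V₁ × V₂) (w i)).1 with ha_def
  set b : Fin k → V₂ := fun i => (WithLp.equiv 2 (V₁ × V₂) (w i)).2 with hb_def
  have hsq : ∀ x : WithLp 2 (V₁ × V₂),
      ‖x‖ ^ 2 = ‖(WithLp.equiv 2 (V₁ × V₂) x).1‖ ^ 2 + ‖(WithLp.equiv 2 (V₁ × V₂) x).2‖ ^ 2 := by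
    intro x
    rw [← real_inner_self_eq_norm_sq, WithLp.prod_inner_apply,
      real_inner_self_eq_norm_sq, real_inner_self_eq_norm_sq]
    rfl
  have hnormv : ‖v‖ = 1 := by simpa using hon.1 0
  have hv : ‖v₁‖ ^ 2 + ‖v₂‖ ^ 2 = 1 := by
    rw [hv₁_def, hv₂_def, ← hsq, hnormv]; norm_num
  have hnormw : ∀ i, ‖w i‖ = 1 := fun i => by simpa using hon.1 i.succ
  have H2 : ∑ i, (‖a i‖ ^ 2 + ‖b i‖ ^ 2) = (k : ℝ) := by
    have : ∀ i, ‖a i‖ ^ 2 + ‖b i‖ ^ 2 = 1 := by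
      intro i
      rw [ha_def, hb_def]
      simp only
      rw [← hsq, hnormw]; norm_num
    rw [Finset.sum_congr rfl fun i _ => this i]
    simp
  -- Bessel-type inequalities
  have bessel : ∀ x : WithLp 2 (V₁ × V₂),
      (∑ i, ⟪w i, x⟫ ^ 2) + ⟪v, x⟫ ^ 2 ≤ ‖x‖ ^ 2 := by
    intro x
    have h0 := hon.sum_inner_products_le (x := x) (s := Finset.univ)
    rw [Fin.sum_univ_succ] at h0
    simp only [Fin.cons_zero, Fin.cons_succ] at h0
    have hre : ∀ y z : WithLp 2 (V₁ × V₂), ‖(⟪y, z⟫ : ℝ)‖ ^ 2 = ⟪y, z⟫ ^ 2 := by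
      intro y z; rw [Real.norm_eq_abs, sq_abs]
    rw [hre] at h0
    calc (∑ i, ⟪w i, x⟫ ^ 2) + ⟪v, x⟫ ^ 2
        = ⟪v, x⟫ ^ 2 + ∑ i, ⟪w i, x⟫ ^ 2 := by ring
      _ ≤ ‖x‖ ^ 2 := by
          refine le_trans (le_of_eq ?_) h0
          congr 1
          exact Finset.sum_congr rfl fun i _ => (hre _ _).symm
  have H1 : ∀ x : V₁, (∑ i, ⟪a i, x⟫ ^ 2) + ⟪v₁, x⟫ ^ 2 ≤ ‖x‖ ^ 2 := by
    intro x
    have h0 := bessel ((WithLp.equiv 2 (V₁ × V₂)).symm (x, 0))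
    have e1 : ∀ z : WithLp 2 (V₁ × V₂),
        ⟪z, (WithLp.equiv 2 (V₁ × V₂)).symm (x, 0)⟫
          = ⟪(WithLp.equiv 2 (V₁ × V₂) z).1, x⟫ := by
      intro z
      rw [WithLp.prod_inner_apply]
      simp
    rw [e1 v] at h0
    have e2 : ∑ i, ⟪w i, (WithLp.equiv 2 (V₁ × V₂)).symm (x, 0)⟫ ^ 2
        = ∑ i, ⟪a i, x⟫ ^ 2 := Finset.sum_congr rfl fun i _ => by rw [e1 (w i)]
    rw [e2] at h0
    have e3 : ‖(WithLp.equiv 2 (V₁ × V₂)).symm (x, 0)‖ ^ 2 = ‖x‖ ^ 2 := by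
      rw [hsq]; simp
    rwa [e3] at h0
  have H3 : ∀ y : V₂, (∑ i, ⟪b i, y⟫ ^ 2) + ⟪v₂, y⟫ ^ 2 ≤ ‖y‖ ^ 2 := by
    intro y
    have h0 := bessel ((WithLp.equiv 2 (V₁ × V₂)).symm (0, y))
    have e1 : ∀ z : WithLp 2 (V₁ × V₂),
        ⟪z, (WithLp.equiv 2 (V₁ × V₂)).symm (0, y)⟫
          = ⟪(WithLp.equiv 2 (V₁ × V₂) z).2, y⟫ := by
      intro z
      rw [WithLp.prod_inner_apply]
      simp
    rw [e1 v] at h0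
    have e2 : ∑ i, ⟪w i, (WithLp.equiv 2 (V₁ × V₂)).symm (0, y)⟫ ^ 2
        = ∑ i, ⟪b i, y⟫ ^ 2 := Finset.sum_congr rfl fun i _ => by rw [e1 (w i)]
    rw [e2] at h0
    have e3 : ‖(WithLp.equiv 2 (V₁ × V₂)).symm (0, y)‖ ^ 2 = ‖y‖ ^ 2 := by
      rw [hsq]; simp
    rwa [e3] at h0
  -- split the curvature sum
  have hsplit : ∑ i, R v (w i) (w i) v
      = (∑ i, R₁ v₁ (a i) (a i) v₁) + ∑ i, R₂ v₂ (b i) (b i) v₂ := by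
    rw [← Finset.sum_add_distrib]
    exact Finset.sum_congr rfl fun i _ => hR v (w i) (w i) v
  rw [hsplit]
  have H2' : ∑ i, (‖b i‖ ^ 2 + ‖a i‖ ^ 2) = (k : ℝ) := by
    rw [← H2]; exact Finset.sum_congr rfl fun i _ => by ring
  have hS₁ : v₁ ≠ 0 → 0 < ∑ i, R₁ v₁ (a i) (a i) v₁ := fun h =>
    factor hn hm hk₁n hk2 R₁ hsym₁ hskew₁ h₁ v₁ v₂ h hv a b H1 H3 H2
  have hS₂ : v₂ ≠ 0 → 0 < ∑ i, R₂ v₂ (b i) (b i) v₂ := fun h =>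
    factor hm hn hk₂m hk1 R₂ hsym₂ hskew₂ h₂ v₂ v₁ h (by linarith) b a H3 H1 H2'
  by_cases h0 : v₁ = 0
  · have hz : ∑ i, R₁ v₁ (a i) (a i) v₁ = 0 := by
      rw [h0]; simp
    have hv₂ : v₂ ≠ 0 := by
      intro hc
      rw [h0, hc] at hv
      simp at hv
    rw [hz, zero_add]
    exact hS₂ hv₂
  · by_cases h0' : v₂ = 0
    · have hz : ∑ i, R₂ v₂ (b i) (b i) v₂ = 0 := by
        rw [h0']; simp
      rw [hz, add_zero]
      exact hS₁ h0
    · exact add_pos (hS₁ h0) (hS₂ h0')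
end

section
/- Let P be a compact symmetric space whose sectional curvature of the 2-plane spanned by perpendicular unit vectors v, w ∈ 𝔭 is given by sec(v,w) = ‖[v,w]‖². Then for any positive integer k, P has positive k-th intermediate Ricci curvature if and only if k ≥ k_P, where k_P = max_{ξ ∈ 𝔭 ∖ {0}} dim C_𝔭(ξ) and C_𝔭(ξ) is the centralizer of ξ in 𝔭. -/
/-- Let `P` be a compact symmetric space, its tangent space at the base point identified
with `𝔭` (a finite-dimensional real inner product space), with Lie bracket
`b = [·,·] : 𝔭 × 𝔭 → 𝔨` and sectional curvature `sec(v,w) = ‖[v,w]‖²` for orthonormal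
`v, w`.  Let `k_P` be the maximum over `ξ ∈ 𝔭 ∖ {0}` of `dim C_𝔭(ξ)`, where
`C_𝔭(ξ) = {v : [v, ξ] = 0}`.  Then for every positive integer `k`, `P` has positive
`k`-th intermediate Ricci curvature (i.e. for every orthonormal `(k+1)`-frame
`{v, w₁, …, w_k}` one has `∑ᵢ ‖[v, wᵢ]‖² > 0`) if and only if `k ≥ k_P`. -/
theorem stmt_8 {𝔭 𝔨 : Type*}
    [NormedAddCommGroup 𝔭] [InnerProductSpace ℝ 𝔭] [FiniteDimensional ℝ 𝔭]
    [NormedAddCommGroup 𝔨] [InnerProductSpace ℝ 𝔨]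
    (b : 𝔭 →ₗ[ℝ] 𝔭 →ₗ[ℝ] 𝔨) (halt : ∀ v, b v v = 0)
    (kP : ℕ)
    (hkP : IsGreatest
      {d : ℕ | ∃ ξ : 𝔭, ξ ≠ 0 ∧ d = Module.finrank ℝ ↥(LinearMap.ker (b.flip ξ))} kP) :
    ∀ k : ℕ, 1 ≤ k →
      ((∀ (v : 𝔭) (w : Fin k → 𝔭), Orthonormal ℝ (Fin.cons v w) →
          0 < ∑ i, ‖b v (w i)‖ ^ 2) ↔ kP ≤ k) := by
  have hanti : ∀ v w : 𝔭, b w v = - b v w := by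
    intro v w
    have h := halt (v + w)
    simp only [map_add, LinearMap.add_apply, halt, zero_add, add_zero] at h
    exact eq_neg_of_add_eq_zero_left h
  intro k hk
  constructor
  · -- Ric_k > 0 → kP ≤ k
    intro h
    by_contra hlt
    push_neg at hlt  -- k < kP
    obtain ⟨ξ, hξ, hdim⟩ := hkP.1
    set C : Submodule ℝ 𝔭 := LinearMap.ker (b.flip ξ) with hC
    set D : Submodule ℝ 𝔭 := (Submodule.span ℝ {ξ})ᗮ with hD
    have hDdim : Module.finrank ℝ D + 1 = Module.finrank ℝ 𝔭 := by
      have := Submodule.finrank_add_finrank_orthogonal (Submodule.span ℝ {ξ})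
      rw [finrank_span_singleton hξ] at this
      rw [hD]
      omega
    have h1 := Submodule.finrank_sup_add_finrank_inf_eq C D
    have h2 : Module.finrank ℝ ↥(C ⊔ D) ≤ Module.finrank ℝ 𝔭 :=
      Submodule.finrank_le _
    have hE : k ≤ Module.finrank ℝ ↥(C ⊓ D) := by omega
    set E := C ⊓ D with hEdef
    let obE := stdOrthonormalBasis ℝ E
    set v : 𝔭 := ‖ξ‖⁻¹ • ξ with hv
    set w : Fin k → 𝔭 := fun i => (obE ⟨i, lt_of_lt_of_le i.2 hE⟩ : 𝔭) with hw
    have hwE : ∀ i, w i ∈ E := fun i => (obE ⟨i, lt_of_lt_of_le i.2 hE⟩).2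
    have hwxi : ∀ i, (inner ℝ ξ (w i) : ℝ) = 0 := by
      intro i
      exact Submodule.mem_orthogonal_singleton_iff_inner_right.mp (hwE i).2
    have hnv : ‖v‖ = 1 := by
      rw [hv, norm_smul]
      simp [norm_inv, norm_norm, inv_mul_cancel₀ (norm_ne_zero_iff.mpr hξ)]
    have hon : Orthonormal ℝ (Fin.cons v w) := by
      rw [orthonormal_iff_ite]
      intro i j
      refine Fin.cases ?_ ?_ i <;> [skip; intro i'] <;>
        refine Fin.cases ?_ ?_ j <;> [skip; (intro j'); skip; (intro j')]
      · simp only [Fin.cons_zero, if_pos rfl]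
        rw [real_inner_self_eq_norm_sq, hnv]
        norm_num
      · simp only [Fin.cons_zero, Fin.cons_succ, hv, real_inner_smul_left, hwxi,
          mul_zero]
        simp [(Fin.succ_ne_zero j').symm]
      · simp only [Fin.cons_zero, Fin.cons_succ, hv, real_inner_smul_right]
        rw [real_inner_comm, hwxi, mul_zero]
        simp [Fin.succ_ne_zero i']
      · have hob := obE.orthonormal
        rw [orthonormal_iff_ite] at hob
        have h2 := hob ⟨i', lt_of_lt_of_le i'.2 hE⟩ ⟨j', lt_of_lt_of_le j'.2 hE⟩
        simp only [Fin.cons_succ, hw]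
        rw [show (inner ℝ (w i') (w j') : ℝ) = inner ℝ (obE ⟨i', lt_of_lt_of_le i'.2 hE⟩)
          (obE ⟨j', lt_of_lt_of_le j'.2 hE⟩) from rfl, h2]
        simp [Fin.ext_iff]
    have hzero : ∀ i, b v (w i) = 0 := by
      intro i
      have hmem : w i ∈ C := (hwE i).1
      have h3 : b (w i) ξ = 0 := hmem
      have hbxi : b ξ (w i) = 0 := by
        rw [hanti (w i) ξ, h3, neg_zero]
      simp [hv, map_smul, hbxi]
    have := h v w hon
    simp only [hzero, norm_zero] at this
    simp at this
  · -- kP ≤ k → Ric_k > 0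
    intro hle v w hon
    rcases lt_or_eq_of_le
      (Finset.sum_nonneg (fun i (_ : i ∈ Finset.univ) => sq_nonneg ‖b v (w i)‖)) with hpos | heq
    · exact hpos
    exfalso
    have hzero : ∀ i, b v (w i) = 0 := by
      intro i
      have h4 := (Finset.sum_eq_zero_iff_of_nonneg
        (fun i (_ : i ∈ Finset.univ) => sq_nonneg ‖b v (w i)‖)).mp heq.symm i (Finset.mem_univ i)
      have : ‖b v (w i)‖ = 0 := by
        nlinarith [norm_nonneg (b v (w i))]
      exact norm_eq_zero.mp this
    set C : Submodule ℝ 𝔭 := LinearMap.ker (b.flip v) with hC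
    have hmem : ∀ i : Fin (k+1), (Fin.cons v w : Fin (k+1) → 𝔭) i ∈ C := by
      intro i
      refine Fin.cases ?_ ?_ i
      · simpa [hC] using halt v
      · intro j
        simp only [Fin.cons_succ]
        show b (w j) v = 0
        rw [hanti v (w j), hzero j, neg_zero]
    have hli := hon.linearIndependent
    have hspan : Submodule.span ℝ (Set.range (Fin.cons v w)) ≤ C := by
      rw [Submodule.span_le]
      rintro x ⟨i, rfl⟩
      exact hmem i
    have hcard : Module.finrank ℝ ↥(Submodule.span ℝ (Set.range (Fin.cons v w)))
        = k + 1 := by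
      rw [finrank_span_eq_card hli, Fintype.card_fin]
    have hCk : k + 1 ≤ Module.finrank ℝ C := by
      rw [← hcard]
      exact Submodule.finrank_mono hspan
    have hvne : v ≠ 0 := by
      intro hv0
      have h5 := hon.1 0
      rw [Fin.cons_zero, hv0] at h5
      simp at h5
    have : Module.finrank ℝ C ≤ kP := hkP.2 ⟨v, hvne, by rw [hC]⟩
    omega
end
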